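/- Let C : Fin d → Fin d → Fin d → ℝ be antisymmetric in its two upper indices, and t^σ := Σ_ν C^{νσ}_ν. Let M, Q : (Fin d → ℝ) → ℝ be continuously differentiable and f : (Fin d → ℝ) → ℝ be twice continuously differentiable with compact support, and suppose δM, δQ : (Fin d → ℝ) → ℝ satisfy, for all x: δM(x) = M(x)·Σ_σ t^σ·∂_σ f(x) + {M,f}(x) and δQ(x) = {Q,f}(x). Then ∫_{ℝ^d} (Q(x)·δM(x) + M(x)·δQ(x)) dx = 0, the integral being taken with respect to Lebesgue measure on Fin d → ℝ. -/

import Mathlib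

open MeasureTheory

/-- Partial derivative in the `μ`-th coordinate direction. -/
noncomputable def pd {d : ℕ} (μ : Fin d) (g : (Fin d → ℝ) → ℝ) (x : Fin d → ℝ) : ℝ :=
  fderiv ℝ g x (Pi.single μ 1)

/-- The Lie-algebra-type Poisson bracket `{g,h}(x) = Σ x_λ C^{μν}_λ ∂_μ g ∂_ν h`. -/
noncomputable def pb {d : ℕ} (C : Fin d → Fin d → Fin d → ℝ) (g h : (Fin d → ℝ) → ℝ)
    (x : Fin d → ℝ) : ℝ :=
  ∑ lam, ∑ μ, ∑ ν, x lam * C μ ν lam * pd μ g x * pd ν h x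

/-- The auxiliary vector field whose divergence is (minus) the variation of the
Lagrangian density. -/
noncomputable def Vfun {d : ℕ} (C : Fin d → Fin d → Fin d → ℝ) (M Q f : (Fin d → ℝ) → ℝ)
    (ν : Fin d) : (Fin d → ℝ) → ℝ :=
  fun y => ∑ lam, ∑ μ, C μ ν lam * (y lam * (M y * Q y * pd μ f y))

lemma integral_pd_eq_zero {d : ℕ} (ν : Fin d) (V : (Fin d → ℝ) → ℝ)
    (hV : ContDiff ℝ 1 V) (hVs : HasCompactSupport V) :
    ∫ x : Fin d → ℝ, pd ν V x = 0 := by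
  have hfd : Continuous (fun x : Fin d → ℝ => fderiv ℝ V x (Pi.single ν 1)) :=
    (ContinuousLinearMap.apply ℝ ℝ (Pi.single ν 1)).continuous.comp
      (hV.continuous_fderiv one_ne_zero)
  have hint1 : Integrable (fun x : Fin d → ℝ => fderiv ℝ V x (Pi.single ν 1) * 1) := by
    simp only [mul_one]
    apply hfd.integrable_of_hasCompactSupport
    apply (hVs.fderiv (𝕜 := ℝ)).mono
    intro y hy
    simp only [Function.mem_support] at *
    exact fun h => hy (by simp [h])
  have hint2 : Integrable (fun x : Fin d → ℝ =>
      V x * fderiv ℝ (fun _ : Fin d → ℝ => (1:ℝ)) x (Pi.single ν 1)) := by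
    simpa [fderiv_fun_const] using (integrable_zero (Fin d → ℝ) ℝ volume)
  have hint3 : Integrable (fun x : Fin d → ℝ => V x * 1) := by
    simp only [mul_one]
    exact hV.continuous.integrable_of_hasCompactSupport hVs
  have h := integral_mul_fderiv_eq_neg_fderiv_mul_of_integrable hint1 hint2 hint3
    (fun x _ => hV.differentiable one_ne_zero x) (fun x _ => differentiable_const (1:ℝ) x)
  simp only [fderiv_fun_const, Pi.zero_apply, ContinuousLinearMap.zero_apply, mul_zero, mul_one,
    integral_zero] at h
  simp only [pd]
  have := neg_eq_zero.mp h.symm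
  linarith

lemma pdf_contDiff {d : ℕ} {f : (Fin d → ℝ) → ℝ} (hf : ContDiff ℝ 2 f) (μ : Fin d) :
    ContDiff ℝ 1 (pd μ f) := by
  show ContDiff ℝ 1 (fun x => fderiv ℝ f x (Pi.single μ 1))
  simpa [pd, Function.comp_def] using
    (ContinuousLinearMap.apply ℝ ℝ (Pi.single μ (1:ℝ))).contDiff.comp
      (hf.fderiv_right (le_refl 2))

lemma Vfun_contDiff {d : ℕ} {C : Fin d → Fin d → Fin d → ℝ} {M Q f : (Fin d → ℝ) → ℝ}
    (hM : ContDiff ℝ 1 M) (hQ : ContDiff ℝ 1 Q) (hf : ContDiff ℝ 2 f) (ν : Fin d) :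
    ContDiff ℝ 1 (Vfun C M Q f ν) := by
  apply ContDiff.sum (fun lam _ => ContDiff.sum (fun μ _ => ?_))
  exact contDiff_const.mul
    (((ContinuousLinearMap.proj (R := ℝ) (φ := fun _ : Fin d => ℝ) lam).contDiff).mul
      ((hM.mul hQ).mul (pdf_contDiff hf μ)))

lemma Vfun_supp {d : ℕ} {C : Fin d → Fin d → Fin d → ℝ} {M Q f : (Fin d → ℝ) → ℝ}
    (hfsupp : HasCompactSupport f) (ν : Fin d) :
    HasCompactSupport (Vfun C M Q f ν) := by
  apply (hfsupp.fderiv (𝕜 := ℝ)).mono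
  intro y hy
  simp only [Function.mem_support] at *
  intro h
  apply hy
  simp only [Vfun, pd, h, ContinuousLinearMap.zero_apply, mul_zero, zero_mul,
    Finset.sum_const_zero]

lemma pd_Vfun {d : ℕ} (C : Fin d → Fin d → Fin d → ℝ) (M Q f : (Fin d → ℝ) → ℝ)
    (hM : ContDiff ℝ 1 M) (hQ : ContDiff ℝ 1 Q) (hf : ContDiff ℝ 2 f) (ν : Fin d)
    (x : Fin d → ℝ) :
    pd ν (Vfun C M Q f ν) x
      = ∑ lam, ∑ μ, C μ ν lam * (((Pi.single ν 1 : Fin d → ℝ) lam) * (M x * Q x * pd μ f x)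
        + x lam * ((pd ν M x * Q x + M x * pd ν Q x) * pd μ f x
          + M x * Q x * fderiv ℝ (fderiv ℝ f) x (Pi.single ν 1) (Pi.single μ 1))) := by
  have hMx := (hM.differentiable one_ne_zero x).hasFDerivAt
  have hQx := (hQ.differentiable one_ne_zero x).hasFDerivAt
  have hdf : HasFDerivAt (fderiv ℝ f) (fderiv ℝ (fderiv ℝ f) x) x :=
    (((hf.fderiv_right (le_refl 2)).differentiable one_ne_zero) x).hasFDerivAt
  have hpf : ∀ μ : Fin d, HasFDerivAt (pd μ f)
      ((ContinuousLinearMap.apply ℝ ℝ (Pi.single μ 1)).comp (fderiv ℝ (fderiv ℝ f) x)) x :=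
    fun μ => by show HasFDerivAt (fun x => fderiv ℝ f x (Pi.single μ 1)) _ x; simpa [pd, Function.comp_def] using
      (ContinuousLinearMap.apply ℝ ℝ (Pi.single μ (1:ℝ))).hasFDerivAt.comp x hdf
  have hV : HasFDerivAt
      (fun y => ∑ lam : Fin d, ∑ μ : Fin d, C μ ν lam * (y lam * (M y * Q y * pd μ f y)))
      (∑ lam : Fin d, ∑ μ : Fin d, _) x :=
    HasFDerivAt.fun_sum (fun lam _ => HasFDerivAt.fun_sum (fun μ _ =>
      (((ContinuousLinearMap.proj (R := ℝ) (φ := fun _ : Fin d => ℝ) lam).hasFDerivAt.mul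
        ((hMx.mul hQx).mul (hpf μ))).const_mul (C μ ν lam))))
  rw [pd, show (Vfun C M Q f ν) = (fun y => ∑ lam : Fin d, ∑ μ : Fin d,
    C μ ν lam * (y lam * (M y * Q y * pd μ f y))) from rfl, hV.fderiv]
  simp only [ContinuousLinearMap.sum_apply, ContinuousLinearMap.add_apply,
    ContinuousLinearMap.smul_apply, ContinuousLinearMap.comp_apply,
    ContinuousLinearMap.proj_apply, ContinuousLinearMap.apply_apply, smul_eq_mul, pd, Pi.mul_apply]
  refine Finset.sum_congr rfl fun lam _ => Finset.sum_congr rfl fun μ _ => by ring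

lemma sum3_rot {d : ℕ} (F : Fin d → Fin d → Fin d → ℝ) :
    (∑ a, ∑ b, ∑ c, F a b c) = ∑ b, ∑ c, ∑ a, F a b c := by
  rw [Finset.sum_comm]
  exact Finset.sum_congr rfl fun b _ => Finset.sum_comm

lemma sum3_antisym {d : ℕ} (F : Fin d → Fin d → Fin d → ℝ)
    (h : ∀ a b c, F a b c = - F c b a) : (∑ a, ∑ b, ∑ c, F a b c) = 0 := by
  have key : (∑ a, ∑ b, ∑ c, F a b c) = -(∑ a, ∑ b, ∑ c, F a b c) := by
    calc (∑ a, ∑ b, ∑ c, F a b c)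
        = ∑ a, ∑ c, ∑ b, F a b c :=
          Finset.sum_congr rfl fun a _ => Finset.sum_comm
      _ = ∑ c, ∑ a, ∑ b, F a b c := Finset.sum_comm
      _ = ∑ c, ∑ a, ∑ b, -F c b a := by
          exact Finset.sum_congr rfl fun c _ => Finset.sum_congr rfl fun a _ =>
            Finset.sum_congr rfl fun b _ => by rw [← h]
      _ = -(∑ c, ∑ a, ∑ b, F c b a) := by
          simp [← Finset.sum_neg_distrib]
      _ = -(∑ a, ∑ b, ∑ c, F a b c) := by
          congr 1
          exact Finset.sum_congr rfl fun a _ => Finset.sum_comm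
  linarith

lemma sum2_antisym_pair {d : ℕ} (K H : Fin d → Fin d → ℝ) (h : ∀ μ ν, H μ ν = -K ν μ) :
    (∑ μ, ∑ ν, H μ ν) = -∑ μ, ∑ ν, K μ ν := by
  calc (∑ μ, ∑ ν, H μ ν) = ∑ μ, ∑ ν, -K ν μ := by
        exact Finset.sum_congr rfl fun μ _ => Finset.sum_congr rfl fun ν _ => h μ ν
    _ = -∑ μ, ∑ ν, K ν μ := by simp [← Finset.sum_neg_distrib]
    _ = -∑ μ, ∑ ν, K μ ν := by rw [Finset.sum_comm]

theorem gauge_variation_integral_zero {d : ℕ} (C : Fin d → Fin d → Fin d → ℝ)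
    (hC : ∀ μ ν lam, C μ ν lam = - C ν μ lam)
    (t : Fin d → ℝ) (ht : t = fun σ => ∑ ν, C ν σ ν)
    (M Q f : (Fin d → ℝ) → ℝ)
    (hM : ContDiff ℝ 1 M) (hQ : ContDiff ℝ 1 Q) (hf : ContDiff ℝ 2 f)
    (hfsupp : HasCompactSupport f)
    (δM δQ : (Fin d → ℝ) → ℝ)
    (hδM : ∀ x, δM x = M x * (∑ σ, t σ * pd σ f x) + pb C M f x)
    (hδQ : ∀ x, δQ x = pb C Q f x) :
    ∫ x : Fin d → ℝ, (Q x * δM x + M x * δQ x) = 0 := by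
  -- pointwise identity
  have hid : ∀ x : Fin d → ℝ, Q x * δM x + M x * δQ x
      = -∑ ν, pd ν (Vfun C M Q f ν) x := by
    intro x
    have hsym : ∀ v w, fderiv ℝ (fderiv ℝ f) x v w = fderiv ℝ (fderiv ℝ f) x w v :=
      (hf.contDiffAt.isSymmSndFDerivAt (by simp)).eq
    have hkey : ∀ ν, pd ν (Vfun C M Q f ν) x
        = ∑ lam, ∑ μ, C μ ν lam * (((Pi.single ν 1 : Fin d → ℝ) lam) * (M x * Q x * pd μ f x)
          + x lam * ((pd ν M x * Q x + M x * pd ν Q x) * pd μ f x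
            + M x * Q x * fderiv ℝ (fderiv ℝ f) x (Pi.single ν 1) (Pi.single μ 1))) :=
      fun ν => pd_Vfun C M Q f hM hQ hf ν x
    rw [hδM x, hδQ x, ht]
    simp only [pb, hkey]
    -- split RHS into three sums
    simp only [mul_add, Finset.sum_add_distrib, neg_add]
    have h3 : (∑ ν : Fin d, ∑ lam : Fin d, ∑ μ : Fin d,
        C μ ν lam * (x lam * (M x * Q x *
          fderiv ℝ (fderiv ℝ f) x (Pi.single ν 1) (Pi.single μ 1)))) = 0 := by
      apply sum3_antisym
      intro a b c
      rw [hC c a b, hsym (Pi.single c 1) (Pi.single a 1)]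
      ring
    have h1 : Q x * (M x * ∑ σ : Fin d, (∑ ν : Fin d, C ν σ ν) * pd σ f x)
        = -∑ ν : Fin d, ∑ lam : Fin d, ∑ μ : Fin d,
            C μ ν lam * ((Pi.single ν 1 : Fin d → ℝ) lam * (M x * Q x * pd μ f x)) := by
      have hcollapse : (∑ ν : Fin d, ∑ lam : Fin d, ∑ μ : Fin d,
          C μ ν lam * ((Pi.single ν 1 : Fin d → ℝ) lam * (M x * Q x * pd μ f x)))
          = ∑ ν : Fin d, ∑ μ : Fin d, C μ ν ν * (M x * Q x * pd μ f x) := by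
        refine Finset.sum_congr rfl fun ν _ => ?_
        rw [Finset.sum_comm]
        refine Finset.sum_congr rfl fun μ _ => ?_
        simp [Pi.single_apply]
      rw [hcollapse]
      calc Q x * (M x * ∑ σ : Fin d, (∑ ν : Fin d, C ν σ ν) * pd σ f x)
          = ∑ σ : Fin d, ∑ ν : Fin d, Q x * (M x * (C ν σ ν * pd σ f x)) := by
            rw [Finset.mul_sum, Finset.mul_sum]
            refine Finset.sum_congr rfl fun σ _ => ?_
            rw [Finset.sum_mul, Finset.mul_sum, Finset.mul_sum]
        _ = -∑ ν : Fin d, ∑ μ : Fin d, C μ ν ν * (M x * Q x * pd μ f x) := by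
            apply sum2_antisym_pair
            intro σ ν
            rw [hC σ ν ν]
            ring
    have h2 : (Q x * ∑ lam : Fin d, ∑ μ : Fin d, ∑ ν : Fin d,
          x lam * C μ ν lam * pd μ M x * pd ν f x)
        + M x * ∑ lam : Fin d, ∑ μ : Fin d, ∑ ν : Fin d,
          x lam * C μ ν lam * pd μ Q x * pd ν f x
        = -∑ ν : Fin d, ∑ lam : Fin d, ∑ μ : Fin d,
            C μ ν lam * (x lam * ((pd ν M x * Q x + M x * pd ν Q x) * pd μ f x)) := by
      rw [sum3_rot (fun a b c => C c a b * (x b * ((pd a M x * Q x + M x * pd a Q x)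
        * pd c f x)))]
      rw [Finset.mul_sum, Finset.mul_sum, ← Finset.sum_add_distrib, ← Finset.sum_neg_distrib]
      refine Finset.sum_congr rfl fun lam _ => ?_
      calc Q x * (∑ μ : Fin d, ∑ ν : Fin d, x lam * C μ ν lam * pd μ M x * pd ν f x)
            + M x * (∑ μ : Fin d, ∑ ν : Fin d, x lam * C μ ν lam * pd μ Q x * pd ν f x)
          = ∑ μ : Fin d, ∑ ν : Fin d, (Q x * (x lam * C μ ν lam * pd μ M x * pd ν f x)
              + M x * (x lam * C μ ν lam * pd μ Q x * pd ν f x)) := by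
            simp only [Finset.mul_sum]
            rw [← Finset.sum_add_distrib]
            exact Finset.sum_congr rfl fun μ _ => (Finset.sum_add_distrib).symm
        _ = -∑ μ : Fin d, ∑ ν : Fin d,
              C μ ν lam * (x lam * ((pd ν M x * Q x + M x * pd ν Q x) * pd μ f x)) := by
            apply sum2_antisym_pair
            intro μ ν
            rw [hC ν μ lam]
            ring
    linarith [h1, h2, h3]
  calc ∫ x : Fin d → ℝ, (Q x * δM x + M x * δQ x)
      = ∫ x : Fin d → ℝ, -∑ ν, pd ν (Vfun C M Q f ν) x := by
        exact integral_congr_ae (Filter.Eventually.of_forall hid)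
    _ = -∑ ν, ∫ x : Fin d → ℝ, pd ν (Vfun C M Q f ν) x := by
        rw [integral_neg, integral_finset_sum]
        intro ν _
        have hcont : Continuous (fun x : Fin d → ℝ => pd ν (Vfun C M Q f ν) x) := by
          simp only [pd]
          exact (ContinuousLinearMap.apply ℝ ℝ (Pi.single ν (1:ℝ))).continuous.comp
            ((Vfun_contDiff hM hQ hf ν).continuous_fderiv one_ne_zero)
        apply hcont.integrable_of_hasCompactSupport
        apply ((Vfun_supp (C := C) (M := M) (Q := Q) hfsupp ν).fderiv (𝕜 := ℝ)).mono
        intro y hy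
        simp only [Function.mem_support, pd] at *
        exact fun h => hy (by simp [h])
    _ = 0 := by
        rw [Finset.sum_eq_zero, neg_zero]
        exact fun ν _ => integral_pd_eq_zero ν _ (Vfun_contDiff hM hQ hf ν)
          (Vfun_supp hfsupp ν)
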